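/- Let q be a non-integer positive rational such that ℕ₀[q] is atomic (equivalently, 1/q ∉ ℕ≥2). Write q = n/d in lowest terms. Then the set of Betti elements of the additive monoid ℕ₀[q] is exactly {n^{m+1}/d^m : m ∈ ℕ₀}. -/

import Mathlib

/-- `a` is an (additive) atom of the submonoid `S`. -/
def IsAddAtomIn {R : Type*} [AddCommMonoid R] (S : AddSubmonoid R) (a : R) : Prop :=
  a ∈ S ∧ a ≠ 0 ∧ ∀ u v, u ∈ S → v ∈ S → u ≠ 0 → v ≠ 0 → a ≠ u + v

/-- Factorizations of `x` into atoms of `S`: multisets of atoms summing to `x`. -/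
def Factorizations {R : Type*} [AddCommMonoid R] (S : AddSubmonoid R) (x : R) : Type _ :=
  {l : Multiset R // (∀ a ∈ l, IsAddAtomIn S a) ∧ l.sum = x}

/-- The Betti graph of `x`: vertices are the factorizations of `x`, with an edge between
two distinct factorizations precisely when they share a common atom. -/
def bettiGraph {R : Type*} [AddCommMonoid R] (S : AddSubmonoid R) (x : R) :
    SimpleGraph (Factorizations S x) where
  Adj z z' := z ≠ z' ∧ ∃ a, a ∈ z.1 ∧ a ∈ z'.1
  symm := ⟨fun z z' h => ⟨h.1.symm, h.2.imp fun a ha => ⟨ha.2, ha.1⟩⟩⟩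
  loopless := ⟨fun z h => h.1 rfl⟩

/-- `x` is a Betti element of `S`: `x ∈ S` and its Betti graph is disconnected. -/
def IsBetti {R : Type*} [AddCommMonoid R] (S : AddSubmonoid R) (x : R) : Prop :=
  x ∈ S ∧ ¬ (bettiGraph S x).Connected


namespace S16
open Finset

variable {q : ℚ} {n d : ℕ}

lemma dpow_mul_qpow (hqe : (d:ℚ) * q = n) {j m : ℕ} (hjm : j ≤ m) :
    (d:ℚ)^m * q^j = (n:ℚ)^j * (d:ℚ)^(m-j) := by
  have h1 : ((d:ℚ) * q)^j = (n:ℚ)^j := by rw [hqe]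
  have h2 : (d:ℚ)^m = (d:ℚ)^j * (d:ℚ)^(m-j) := by rw [← pow_add]; congr 1; omega
  rw [h2, mul_comm ((d:ℚ)^j), mul_assoc, ← mul_pow, h1, mul_comm]

lemma dvd_head (hn : 0 < n) (hcop : n.Coprime d) (hqe : (d:ℚ) * q = n)
    (h : ℕ → ℤ) (N : ℕ) (hs : ∑ j ∈ range N, (h j : ℚ) * q ^ j = 0) (hN : 0 < N) :
    (n:ℤ) ∣ h 0 := by
  obtain ⟨N', rfl⟩ : ∃ N', N = N' + 1 := ⟨N - 1, by omega⟩
  have hS : (∑ j ∈ range (N' + 1), h j * (n:ℤ)^j * (d:ℤ)^(N' - j)) = 0 := by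
    have : ((∑ j ∈ range (N' + 1), h j * (n:ℤ)^j * (d:ℤ)^(N' - j) : ℤ) : ℚ)
        = (d:ℚ)^N' * ∑ j ∈ range (N' + 1), (h j : ℚ) * q ^ j := by
      rw [Finset.mul_sum]
      push_cast
      refine Finset.sum_congr rfl fun j hj => ?_
      have hj' : j ≤ N' := by simpa [Nat.lt_succ_iff] using hj
      linear_combination (-(h j:ℚ)) * dpow_mul_qpow hqe hj'
    rw [hs, mul_zero] at this
    exact_mod_cast this
  have hdvd : (n:ℤ) ∣ h 0 * (d:ℤ)^N' := by
    have hrest : (n:ℤ) ∣ ∑ j ∈ range N', h (j+1) * (n:ℤ)^(j+1) * (d:ℤ)^(N' - (j+1)) := by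
      refine Finset.dvd_sum fun j _ => ?_
      exact Dvd.dvd.mul_right (Dvd.dvd.mul_left (dvd_pow_self (n:ℤ) (Nat.succ_ne_zero j)) _) _
    have hsplit := Finset.sum_range_succ' (fun j => h j * (n:ℤ)^j * (d:ℤ)^(N' - j)) N'
    rw [hsplit] at hS
    simp only [pow_zero, mul_one, Nat.sub_zero] at hS
    have : h 0 * (d:ℤ)^N' = -∑ j ∈ range N', h (j+1) * (n:ℤ)^(j+1) * (d:ℤ)^(N' - (j+1)) := by
      linarith
    rw [this]
    exact (hrest).neg_right
  have hco : IsCoprime (n:ℤ) ((d:ℤ)^N') := by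
    have : Nat.Coprime n (d^N') := hcop.pow_right N'
    rw [← Nat.isCoprime_iff_coprime] at this
    exact_mod_cast this
  exact hco.dvd_of_dvd_mul_right hdvd


/-- Decomposition of a vanishing combination into trade relations. -/
lemma exists_z (hn : 0 < n) (hcop : n.Coprime d) (hqe : (d:ℚ) * q = n) (hq0 : q ≠ 0) :
    ∀ (N : ℕ) (h : ℕ → ℤ), (∀ j, N ≤ j → h j = 0) →
    (∑ j ∈ range N, (h j : ℚ) * q ^ j = 0) →
    ∃ z : ℕ → ℤ, (∀ j, N ≤ j + 1 → z j = 0) ∧ h 0 = n * z 0 ∧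
      ∀ j, h (j+1) = n * z (j+1) - d * z j := by
  intro N
  induction N with
  | zero =>
    intro h hb _
    exact ⟨fun _ => 0, fun _ _ => rfl, by rw [hb 0 (le_refl 0)]; ring,
      fun j => by rw [hb (j+1) (Nat.zero_le _)]; ring⟩
  | succ N ih =>
    intro h hb hs
    rcases Nat.eq_zero_or_pos N with hN0 | hNpos
    · subst hN0
      have h0 : h 0 = 0 := by
        have := hs
        simp at this
        exact_mod_cast this
      exact ⟨fun _ => 0, fun _ _ => rfl, by rw [h0]; ring,
        fun j => by rw [hb (j+1) (by omega)]; ring⟩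
    · have hdvd : (n:ℤ) ∣ h 0 := dvd_head hn hcop hqe h (N+1) hs (by omega)
      set z0 : ℤ := h 0 / n with hz0
      have hz0' : h 0 = n * z0 := (Int.mul_ediv_cancel' hdvd).symm
      set h' : ℕ → ℤ := fun j => h (j+1) + (if j = 0 then (d:ℤ) * z0 else 0) with hh'
      have hb' : ∀ j, N ≤ j → h' j = 0 := by
        intro j hj
        have : h (j+1) = 0 := hb (j+1) (by omega)
        simp [hh', this]
        intro hj0; omega
      have hs' : ∑ j ∈ range N, (h' j : ℚ) * q ^ j = 0 := by
        have hmul : q * ∑ j ∈ range N, (h' j : ℚ) * q ^ j = 0 := by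
          rw [Finset.mul_sum]
          have step : ∀ j ∈ range N, q * ((h' j : ℚ) * q ^ j)
              = (h (j+1) : ℚ) * q ^ (j+1) + (if j = 0 then (d:ℚ) * z0 * q else 0) := by
            intro j _
            by_cases hj0 : j = 0 <;> simp [hh', hj0] <;> push_cast <;> ring
          rw [Finset.sum_congr rfl step, Finset.sum_add_distrib]
          have e1 : ∑ j ∈ range N, (h (j+1) : ℚ) * q ^ (j+1) = - h 0 := by
            have := Finset.sum_range_succ' (fun j => (h j : ℚ) * q ^ j) N
            rw [this] at hs
            simp only [pow_zero, mul_one] at hs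
            linarith
          have e2 : ∑ j ∈ range N, (if j = 0 then (d:ℚ) * z0 * q else 0) = (h 0 : ℚ) := by
            rw [Finset.sum_ite_eq' (range N) 0 (fun _ => (d:ℚ) * z0 * q)]
            simp only [Finset.mem_range, hNpos, if_true]
            have : (d:ℚ) * q = n := hqe
            have : (d:ℚ) * z0 * q = (n:ℚ) * z0 := by
              rw [mul_comm ((d:ℚ)) (z0:ℚ), mul_assoc, hqe]; ring
            rw [this]
            exact_mod_cast congrArg (fun t : ℤ => (t:ℚ)) hz0'.symm
          rw [e1, e2]; ring
        exact (mul_eq_zero.mp hmul).resolve_left hq0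
      obtain ⟨z', hz'b, hz'0, hz's⟩ := ih h' hb' hs'
      refine ⟨fun j => if j = 0 then z0 else z' (j-1), ?_, by simpa using hz0', ?_⟩
      · intro j hj
        have hj0 : j ≠ 0 := by omega
        simp only [hj0, if_false]
        exact hz'b (j-1) (by omega)
      · intro j
        cases j with
        | zero =>
          have e : h' 0 = n * z' 0 := hz'0
          have e2 : h' 0 = h 1 + d * z0 := by simp [hh']
          norm_num
          linarith [e, e2]
        | succ i =>
          have := hz's i
          simp only [hh', Nat.succ_ne_zero, if_false, add_zero] at this
          simpa using this

lemma sum_ext {g : ℕ → ℚ} {N M : ℕ} (hNM : N ≤ M) (hb : ∀ j, N ≤ j → g j = 0) :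
    ∑ j ∈ range M, g j = ∑ j ∈ range N, g j :=
  (Finset.sum_subset (Finset.range_subset_range.2 hNM)
    (fun x _ hnx => hb x (by simpa using hnx))).symm

lemma unique_small (hn : 0 < n) (hcop : n.Coprime d) (hqe : (d:ℚ) * q = n) (hq0 : q ≠ 0)
    (f : ℕ → ℕ) (N : ℕ) (hb : ∀ j, N ≤ j → f j = 0) (c k : ℕ) (hcn : c < n) (hcd : c < d)
    (hs : ∑ j ∈ range N, (f j : ℚ) * q ^ j = (c : ℚ) * q ^ k) :
    ∀ j, f j = if j = k then c else 0 := by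
  classical
  set N' := max N (k+1) with hN'
  set h : ℕ → ℤ := fun j => (f j : ℤ) - (if j = k then (c:ℤ) else 0) with hh
  have hb2 : ∀ j, N' ≤ j → h j = 0 := by
    intro j hj
    have h1 : f j = 0 := hb j (le_trans (le_max_left _ _) hj)
    have h2 : j ≠ k := by omega
    simp [hh, h1, h2]
  have hsum : ∑ j ∈ range N', (h j : ℚ) * q ^ j = 0 := by
    have e0 : ∀ j, (h j : ℚ) * q ^ j
        = (f j : ℚ) * q ^ j - (if j = k then (c:ℚ) * q ^ j else 0) := by
      intro j; by_cases hjk : j = k <;> simp [hh, hjk] <;> push_cast <;> ring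
    simp only [e0]
    rw [Finset.sum_sub_distrib]
    have e1 : ∑ j ∈ range N', (f j : ℚ) * q ^ j = (c : ℚ) * q ^ k := by
      rw [sum_ext (le_max_left N (k+1)) (fun j hj => by simp [hb j hj])]
      exact hs
    have e2 : ∑ j ∈ range N', (if j = k then (c:ℚ) * q ^ j else 0) = (c:ℚ) * q ^ k := by
      rw [Finset.sum_ite_eq' (range N') k (fun j => (c:ℚ) * q ^ j)]
      simp [show k < N' by omega]
    rw [e1, e2]; ring
  obtain ⟨z, hzb, hz0, hzs⟩ := exists_z hn hcop hqe hq0 N' h hb2 hsum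
  have hd : 0 < d := by omega
  have hz : ∀ j, z j = 0 := by
    by_contra hcon
    push_neg at hcon
    obtain ⟨j0, hj0⟩ := hcon
    have hex : ∃ j, z j ≠ 0 := ⟨j0, hj0⟩
    obtain ⟨a, haz, hmin⟩ : ∃ a, z a ≠ 0 ∧ ∀ i, i < a → z i = 0 :=
      ⟨Nat.find hex, Nat.find_spec hex,
        fun i hi => by by_contra hzi; exact absurd hi (not_lt.2 (Nat.find_le hzi))⟩
    have hlow : ∀ j, -(c:ℤ) ≤ h j := by
      intro j
      simp only [hh]
      split <;> omega
    have hha : h a = n * z a := by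
      rcases Nat.eq_zero_or_pos a with h0 | hpos
      · rw [h0]; exact hz0
      · obtain ⟨i, rfl⟩ : ∃ i, a = i + 1 := ⟨a - 1, by omega⟩
        rw [hzs i, hmin i (by omega)]; ring
    have hzapos : 0 < z a := by
      rcases lt_trichotomy (z a) 0 with hlt | he | hgt
      · exfalso
        have : h a ≤ -(n:ℤ) := by
          rw [hha]
          have : z a ≤ -1 := by omega
          nlinarith [Int.natCast_pos.mpr hn]
        have := hlow a
        omega
      · exact absurd he haz
      · exact hgt
    have hstep : ∀ i, 0 < z (a + i) := by
      intro i
      induction i with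
      | zero => simpa using hzapos
      | succ i ihh =>
        have e := hzs (a + i)
        have l := hlow (a + i + 1)
        have : 0 < (n:ℤ) * z (a + i + 1) := by
          have hdz : (d:ℤ) * z (a+i) ≥ (d:ℤ) := by nlinarith [Int.natCast_pos.mpr hd]
          have : (c:ℤ) < d := by exact_mod_cast Int.ofNat_lt.mpr hcd
          omega
        have hn' : 0 < (n:ℤ) := Int.natCast_pos.mpr hn
        have hgoal : 0 < z (a + i + 1) := by nlinarith [this, hn']
        simpa [show a + (i+1) = a + i + 1 from rfl] using hgoal
    have := hstep (N' + 1)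
    have : z (a + (N' + 1)) = 0 := hzb _ (by omega)
    omega
  have hzero : ∀ j, h j = 0 := by
    intro j
    cases j with
    | zero => rw [hz0, hz 0]; ring
    | succ i => rw [hzs i, hz i, hz (i+1)]; ring
  intro j
  have := hzero j
  simp only [hh] at this
  split at this <;> split <;> omega

lemma diff_z (hn : 0 < n) (hcop : n.Coprime d) (hqe : (d:ℚ) * q = n) (hq0 : q ≠ 0)
    (f g : ℕ → ℕ) (N : ℕ) (hbf : ∀ j, N ≤ j → f j = 0) (hbg : ∀ j, N ≤ j → g j = 0)
    (hs : ∑ j ∈ range N, (f j : ℚ) * q ^ j = ∑ j ∈ range N, (g j : ℚ) * q ^ j) :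
    ∃ z : ℕ → ℤ, (∀ j, N ≤ j + 1 → z j = 0) ∧ ((f 0 : ℤ) - g 0) = n * z 0 ∧
      ∀ j, (f (j+1) : ℤ) - g (j+1) = n * z (j+1) - d * z j := by
  set h : ℕ → ℤ := fun j => (f j : ℤ) - g j with hh
  have hb : ∀ j, N ≤ j → h j = 0 := fun j hj => by simp [hh, hbf j hj, hbg j hj]
  have hsum : ∑ j ∈ range N, (h j : ℚ) * q ^ j = 0 := by
    have : ∀ j, (h j : ℚ) * q ^ j = (f j : ℚ) * q ^ j - (g j : ℚ) * q ^ j := by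
      intro j; simp [hh]; push_cast; ring
    simp only [this]
    rw [Finset.sum_sub_distrib, hs, sub_self]
  obtain ⟨z, h1, h2, h3⟩ := exists_z hn hcop hqe hq0 N h hb hsum
  exact ⟨z, h1, h2, h3⟩

/-- Uniqueness of reduced factorizations, `q > 1` case (all coordinates `< n`). -/
lemma reduced_unique_n (hn : 0 < n) (hcop : n.Coprime d) (hqe : (d:ℚ) * q = n) (hq0 : q ≠ 0)
    (f g : ℕ → ℕ) (N : ℕ) (hbf : ∀ j, N ≤ j → f j = 0) (hbg : ∀ j, N ≤ j → g j = 0)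
    (hf : ∀ j, f j < n) (hg : ∀ j, g j < n)
    (hs : ∑ j ∈ range N, (f j : ℚ) * q ^ j = ∑ j ∈ range N, (g j : ℚ) * q ^ j) :
    ∀ j, f j = g j := by
  obtain ⟨z, hzb, hz0, hzs⟩ := diff_z hn hcop hqe hq0 f g N hbf hbg hs
  have hz : ∀ j, z j = 0 := by
    by_contra hcon
    push_neg at hcon
    obtain ⟨j0, hj0⟩ := hcon
    have hex : ∃ j, z j ≠ 0 := ⟨j0, hj0⟩
    obtain ⟨a, haz, hmin⟩ : ∃ a, z a ≠ 0 ∧ ∀ i, i < a → z i = 0 :=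
      ⟨Nat.find hex, Nat.find_spec hex,
        fun i hi => by by_contra hzi; exact absurd hi (not_lt.2 (Nat.find_le hzi))⟩
    have hha : (f a : ℤ) - g a = n * z a := by
      rcases Nat.eq_zero_or_pos a with h0 | hpos
      · rw [h0]; exact hz0
      · obtain ⟨i, rfl⟩ : ∃ i, a = i + 1 := ⟨a - 1, by omega⟩
        rw [hzs i, hmin i (by omega)]; ring
    have h1 : (f a : ℤ) < n := by exact_mod_cast Int.ofNat_lt.mpr (hf a)
    have h2 : (g a : ℤ) < n := by exact_mod_cast Int.ofNat_lt.mpr (hg a)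
    have h3 : (0:ℤ) ≤ f a := Int.natCast_nonneg _
    have h4 : (0:ℤ) ≤ g a := Int.natCast_nonneg _
    have hn' : (0:ℤ) < n := Int.natCast_pos.mpr hn
    rcases lt_or_gt_of_ne haz with hlt | hgt
    · nlinarith
    · nlinarith
  intro j
  have : (f j : ℤ) = g j := by
    cases j with
    | zero => have := hz0; rw [hz 0] at this; omega
    | succ i => have := hzs i; rw [hz i, hz (i+1)] at this; omega
  exact_mod_cast this

/-- Uniqueness of reduced factorizations, `q < 1` case (coordinates `< d` above level 0). -/
lemma reduced_unique_d (hn : 0 < n) (hd : 0 < d) (hcop : n.Coprime d) (hqe : (d:ℚ) * q = n)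
    (hq0 : q ≠ 0)
    (f g : ℕ → ℕ) (N : ℕ) (hbf : ∀ j, N ≤ j → f j = 0) (hbg : ∀ j, N ≤ j → g j = 0)
    (hf : ∀ j, 0 < j → f j < d) (hg : ∀ j, 0 < j → g j < d)
    (hs : ∑ j ∈ range N, (f j : ℚ) * q ^ j = ∑ j ∈ range N, (g j : ℚ) * q ^ j) :
    ∀ j, f j = g j := by
  obtain ⟨z, hzb, hz0, hzs⟩ := diff_z hn hcop hqe hq0 f g N hbf hbg hs
  have hz : ∀ j, z j = 0 := by
    by_contra hcon
    push_neg at hcon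
    obtain ⟨j0, hj0⟩ := hcon
    have hj0N : j0 ≤ N := by
      by_contra hb'
      exact hj0 (hzb j0 (by omega))
    set b := Nat.findGreatest (fun j => z j ≠ 0) N with hbdef
    have hbz : z b ≠ 0 := Nat.findGreatest_spec (P := fun j => z j ≠ 0) hj0N hj0
    have hgreat : ∀ k, b < k → z k = 0 := by
      intro k hk
      rcases le_or_gt k N with hkN | hkN
      · by_contra hzk
        exact Nat.findGreatest_is_greatest (P := fun j => z j ≠ 0) hk hkN hzk
      · exact hzb k (by omega)
    have hhb : (f (b+1) : ℤ) - g (b+1) = - ((d:ℤ) * z b) := by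
      rw [hzs b, hgreat (b+1) (by omega)]; ring
    have h1 : (f (b+1) : ℤ) < d := by exact_mod_cast Int.ofNat_lt.mpr (hf (b+1) (by omega))
    have h2 : (g (b+1) : ℤ) < d := by exact_mod_cast Int.ofNat_lt.mpr (hg (b+1) (by omega))
    have h3 : (0:ℤ) ≤ f (b+1) := Int.natCast_nonneg _
    have h4 : (0:ℤ) ≤ g (b+1) := Int.natCast_nonneg _
    have hd' : (0:ℤ) < d := Int.natCast_pos.mpr hd
    rcases lt_or_gt_of_ne hbz with hlt | hgt
    · nlinarith
    · nlinarith
  intro j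
  have : (f j : ℤ) = g j := by
    cases j with
    | zero => have := hz0; rw [hz 0] at this; omega
    | succ i => have := hzs i; rw [hz i, hz (i+1)] at this; omega
  exact_mod_cast this

/-- Hypothesis bundle. -/
structure Ctx (q : ℚ) (n d : ℕ) (M : AddSubmonoid ℚ) : Prop where
  hq : 0 < q
  hn : 2 ≤ n
  hd : 2 ≤ d
  hcop : n.Coprime d
  hqe : (d:ℚ) * q = n
  hM : M = AddSubmonoid.closure (Set.range fun k : ℕ => q ^ k)

namespace Ctx
variable {q : ℚ} {n d : ℕ} {M : AddSubmonoid ℚ} (C : Ctx q n d M)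
include C

lemma hq0 : q ≠ 0 := ne_of_gt C.hq
lemma hn0 : 0 < n := by have := C.hn; omega
lemma hd0 : 0 < d := by have := C.hd; omega
lemma hnd : n ≠ d := by
  intro h
  have := C.hcop
  rw [h] at this
  have h1 : d = 1 := by simpa using this
  have := C.hd
  omega
lemma hq1 : q ≠ 1 := by
  intro h
  apply C.hnd
  have := C.hqe
  rw [h, mul_one] at this
  exact_mod_cast this.symm

lemma qpow_pos (k : ℕ) : 0 < q ^ k := pow_pos C.hq k

lemma pow_injective : Function.Injective (fun k : ℕ => q ^ k) := by
  rcases lt_or_gt_of_ne C.hq1 with h1 | h1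
  · exact fun a b hab => ((pow_right_strictAnti₀ C.hq h1).injective hab)
  · exact fun a b hab => (pow_right_strictMono₀ h1).injective hab

lemma sum_add (f g : ℕ → ℕ) (N : ℕ) :
    ∑ j ∈ range N, ((f j + g j : ℕ) : ℚ) * q ^ j
      = (∑ j ∈ range N, (f j : ℚ) * q ^ j) + ∑ j ∈ range N, (g j : ℚ) * q ^ j := by
  rw [← Finset.sum_add_distrib]
  refine Finset.sum_congr rfl fun j _ => ?_
  push_cast; ring

lemma sum_ite (N k c : ℕ) (hk : k < N) :
    ∑ j ∈ range N, ((if j = k then c else 0 : ℕ) : ℚ) * q ^ j = (c : ℚ) * q ^ k := by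
  have e : ∀ j, ((if j = k then c else 0 : ℕ) : ℚ) * q ^ j
      = if j = k then (c:ℚ) * q ^ j else 0 := by
    intro j; split <;> simp
  simp only [e]
  rw [Finset.sum_ite_eq' (range N) k (fun j => (c:ℚ) * q ^ j)]
  simp [hk]

lemma mem_of_rep (f : ℕ → ℕ) (N : ℕ) :
    (∑ j ∈ range N, (f j : ℚ) * q ^ j) ∈ M := by
  rw [C.hM]
  refine AddSubmonoid.sum_mem _ fun j _ => ?_
  have h1 : q ^ j ∈ AddSubmonoid.closure (Set.range fun k : ℕ => q ^ k) :=
    AddSubmonoid.subset_closure ⟨j, rfl⟩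
  have h2 := AddSubmonoid.nsmul_mem _ h1 (f j)
  rwa [nsmul_eq_mul] at h2

lemma rep_of_mem {x : ℚ} (hx : x ∈ M) :
    ∃ (f : ℕ → ℕ) (N : ℕ), (∀ j, N ≤ j → f j = 0) ∧ ∑ j ∈ range N, (f j : ℚ) * q ^ j = x := by
  rw [C.hM] at hx
  induction hx using AddSubmonoid.closure_induction with
  | mem x hx =>
    obtain ⟨k, rfl⟩ := hx
    refine ⟨fun j => if j = k then 1 else 0, k + 1, fun j hj => by simp; omega, ?_⟩
    rw [C.sum_ite (k+1) k 1 (Nat.lt_succ_self k)]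
    simp
  | zero => exact ⟨fun _ => 0, 0, fun _ _ => rfl, by simp⟩
  | add x y _ _ ihx ihy =>
    obtain ⟨f, Nf, hbf, hsf⟩ := ihx
    obtain ⟨g, Ng, hbg, hsg⟩ := ihy
    refine ⟨fun j => f j + g j, max Nf Ng, fun j hj => by
      have e1 := hbf j (le_trans (le_max_left _ _) hj)
      have e2 := hbg j (le_trans (le_max_right _ _) hj)
      simp [e1, e2], ?_⟩
    rw [C.sum_add f g]
    rw [sum_ext (le_max_left Nf Ng) (fun j hj => by rw [hbf j hj]; simp),
      sum_ext (le_max_right Nf Ng) (fun j hj => by rw [hbg j hj]; simp), hsf, hsg]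

lemma sum_pos {f : ℕ → ℕ} {N j0 : ℕ} (hj0 : j0 < N) (hf : f j0 ≠ 0) :
    0 < ∑ j ∈ range N, (f j : ℚ) * q ^ j := by
  refine Finset.sum_pos' (fun j _ => mul_nonneg (Nat.cast_nonneg _) (le_of_lt (C.qpow_pos j)))
    ⟨j0, Finset.mem_range.2 hj0, ?_⟩
  have h1 : (0:ℚ) < f j0 := by exact_mod_cast Nat.pos_of_ne_zero hf
  exact mul_pos h1 (C.qpow_pos j0)

lemma exists_nonzero_coord {f : ℕ → ℕ} {N : ℕ} {x : ℚ}
    (hs : ∑ j ∈ range N, (f j : ℚ) * q ^ j = x) (hx : x ≠ 0) :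
    ∃ j0, j0 < N ∧ f j0 ≠ 0 := by
  by_contra hc
  push_neg at hc
  apply hx
  rw [← hs]
  refine Finset.sum_eq_zero fun j hj => ?_
  rw [hc j (Finset.mem_range.1 hj)]
  simp

lemma atom_pow (k : ℕ) : IsAddAtomIn M (q ^ k) := by
  refine ⟨by rw [C.hM]; exact AddSubmonoid.subset_closure ⟨k, rfl⟩,
    ne_of_gt (C.qpow_pos k), ?_⟩
  intro u v hu hv hu0 hv0 heq
  obtain ⟨f, Nf, hbf, hsf⟩ := C.rep_of_mem hu
  obtain ⟨g, Ng, hbg, hsg⟩ := C.rep_of_mem hv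
  set N := max Nf Ng with hN
  set F : ℕ → ℕ := fun j => f j + g j with hF
  have hbF : ∀ j, N ≤ j → F j = 0 := fun j hj => by
    simp [hF, hbf j (le_trans (le_max_left _ _) hj), hbg j (le_trans (le_max_right _ _) hj)]
  have hsF : ∑ j ∈ range N, (F j : ℚ) * q ^ j = (1:ℚ) * q ^ k := by
    rw [hF, C.sum_add f g,
      sum_ext (le_max_left Nf Ng) (fun j hj => by rw [hbf j hj]; simp),
      sum_ext (le_max_right Nf Ng) (fun j hj => by rw [hbg j hj]; simp), hsf, hsg]
    rw [one_mul, heq]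
  have hdelta := unique_small C.hn0 C.hcop C.hqe C.hq0 F N hbF 1 k
    (by have := C.hn; omega) (by have := C.hd; omega) hsF
  obtain ⟨j0, hj0N, hj0⟩ := C.exists_nonzero_coord hsf hu0
  obtain ⟨j1, hj1N, hj1⟩ := C.exists_nonzero_coord hsg hv0
  have e0 := hdelta j0
  have e1 := hdelta j1
  have f0 : F j0 ≠ 0 := by simp [hF]; omega
  have f1 : F j1 ≠ 0 := by simp [hF]; omega
  have hj0k : j0 = k := by by_contra hne; simp [hne] at e0; exact f0 e0
  have hj1k : j1 = k := by by_contra hne; simp [hne] at e1; exact f1 e1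
  have hFk : F k = 1 := by simpa using hdelta k
  have e2 : f k ≠ 0 := hj0k ▸ hj0
  have e3 : g k ≠ 0 := hj1k ▸ hj1
  simp only [hF] at hFk
  omega

lemma atom_iff (a : ℚ) : IsAddAtomIn M a ↔ ∃ k, a = q ^ k := by
  constructor
  · rintro ⟨haM, ha0, hasum⟩
    obtain ⟨f, N, hbf, hsf⟩ := C.rep_of_mem haM
    obtain ⟨j0, hj0N, hj0⟩ := C.exists_nonzero_coord hsf ha0
    set F : ℕ → ℕ := fun j => f j - (if j = j0 then 1 else 0) with hF
    by_cases hT : ∀ j, j < N → F j = 0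
    · -- a = q ^ j0
      refine ⟨j0, ?_⟩
      have hfd : ∀ j, f j = if j = j0 then 1 else 0 := by
        intro j
        rcases lt_or_ge j N with hj | hj
        · have hT' := hT j hj
          rcases eq_or_ne j j0 with rfl | hne
          · simp [hF] at hT' ⊢
            omega
          · simp only [hF, if_neg hne] at hT'
            simp only [if_neg hne]
            omega
        · have hne : j ≠ j0 := by omega
          rw [hbf j hj, if_neg hne]
      rw [← hsf]
      calc ∑ j ∈ range N, (f j : ℚ) * q ^ j
          = ∑ j ∈ range N, ((if j = j0 then 1 else 0 : ℕ) : ℚ) * q ^ j := by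
            refine Finset.sum_congr rfl fun j _ => by rw [hfd j]
        _ = (1:ℚ) * q ^ j0 := C.sum_ite N j0 1 hj0N
        _ = q ^ j0 := one_mul _
    · push_neg at hT
      obtain ⟨j1, hj1N, hj1⟩ := hT
      exfalso
      apply hasum (q ^ j0) (∑ j ∈ range N, (F j : ℚ) * q ^ j)
        (C.atom_pow j0).1 (C.mem_of_rep F N) (ne_of_gt (C.qpow_pos j0))
        (ne_of_gt (C.sum_pos hj1N hj1))
      have hrec : ∀ j, f j = (if j = j0 then 1 else 0) + F j := by
        intro j
        rcases eq_or_ne j j0 with rfl | hne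
        · simp [hF]
          omega
        · simp only [hF, if_neg hne]
          omega
      rw [← hsf]
      calc ∑ j ∈ range N, (f j : ℚ) * q ^ j
          = ∑ j ∈ range N, (((if j = j0 then 1 else 0) + F j : ℕ) : ℚ) * q ^ j := by
            refine Finset.sum_congr rfl fun j _ => by rw [← hrec j]
        _ = (∑ j ∈ range N, ((if j = j0 then 1 else 0 : ℕ):ℚ) * q ^ j)
              + ∑ j ∈ range N, (F j : ℚ) * q ^ j := C.sum_add _ F N
        _ = q ^ j0 + ∑ j ∈ range N, (F j : ℚ) * q ^ j := by
            rw [C.sum_ite N j0 1 hj0N]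
            norm_num
  · rintro ⟨k, rfl⟩
    exact C.atom_pow k

lemma msOf_def : True := trivial

end Ctx

/-- The multiset associated to a coordinate function. -/
def msOf (q : ℚ) (f : ℕ → ℕ) (N : ℕ) : Multiset ℚ :=
  ∑ j ∈ Finset.range N, Multiset.replicate (f j) (q ^ j)

namespace Ctx
variable {q : ℚ} {n d : ℕ} {M : AddSubmonoid ℚ} (C : Ctx q n d M)
include C

lemma mem_msOf {f : ℕ → ℕ} {N : ℕ} (hb : ∀ j, N ≤ j → f j = 0) {a : ℚ} :
    a ∈ msOf q f N ↔ ∃ i, f i ≠ 0 ∧ a = q ^ i := by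
  unfold msOf
  rw [Multiset.mem_sum]
  constructor
  · rintro ⟨i, hi, hmem⟩
    rw [Multiset.eq_of_mem_replicate hmem]
    exact ⟨i, fun h0 => by simp [h0] at hmem, rfl⟩
  · rintro ⟨i, hi, rfl⟩
    have hiN : i < N := by
      by_contra hc
      exact hi (hb i (by omega))
    exact ⟨i, Finset.mem_range.2 hiN, Multiset.mem_replicate.2 ⟨hi, rfl⟩⟩

lemma count_msOf {f : ℕ → ℕ} {N : ℕ} (hb : ∀ j, N ≤ j → f j = 0) (k : ℕ) :
    (msOf q f N).count (q ^ k) = f k := by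
  unfold msOf
  rw [Multiset.count_sum']
  rcases lt_or_ge k N with hk | hk
  · rw [Finset.sum_eq_single_of_mem k (Finset.mem_range.2 hk)]
    · rw [Multiset.count_replicate, if_pos rfl]
    · intro j _ hj
      rw [Multiset.count_replicate, if_neg (fun h => hj (C.pow_injective h))]
  · rw [hb k hk]
    refine Finset.sum_eq_zero fun j hj => ?_
    have hjk : ¬ (q ^ k = q ^ j) := fun h => by
      have e := C.pow_injective h
      have := Finset.mem_range.1 hj
      omega
    rw [Multiset.count_replicate, if_neg (fun h => hjk h.symm)]

lemma msOf_eq_iff {f g : ℕ → ℕ} {Nf Ng : ℕ} (hbf : ∀ j, Nf ≤ j → f j = 0)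
    (hbg : ∀ j, Ng ≤ j → g j = 0) :
    msOf q f Nf = msOf q g Ng ↔ ∀ k, f k = g k := by
  constructor
  · intro h k
    rw [← C.count_msOf hbf k, ← C.count_msOf hbg k, h]
  · intro h
    ext a
    by_cases ha : ∃ k, a = q ^ k
    · obtain ⟨k, rfl⟩ := ha
      rw [C.count_msOf hbf k, C.count_msOf hbg k, h k]
    · push_neg at ha
      rw [Multiset.count_eq_zero_of_notMem, Multiset.count_eq_zero_of_notMem]
      · intro hmem
        obtain ⟨i, _, hi⟩ := (C.mem_msOf hbg).1 hmem
        exact ha i hi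
      · intro hmem
        obtain ⟨i, _, hi⟩ := (C.mem_msOf hbf).1 hmem
        exact ha i hi

lemma sum_msOf (f : ℕ → ℕ) (N : ℕ) :
    (msOf q f N).sum = ∑ j ∈ range N, (f j : ℚ) * q ^ j := by
  unfold msOf
  induction N with
  | zero => simp
  | succ N ih =>
    rw [Finset.sum_range_succ, Finset.sum_range_succ, Multiset.sum_add, ih,
      Multiset.sum_replicate, nsmul_eq_mul]

/-- Build a vertex of the Betti graph from a coordinate function. -/
def toFact {x : ℚ} (f : ℕ → ℕ) (N : ℕ) (hb : ∀ j, N ≤ j → f j = 0)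
    (hs : ∑ j ∈ range N, (f j : ℚ) * q ^ j = x) : Factorizations M x :=
  ⟨msOf q f N, fun a ha => by
      obtain ⟨i, _, rfl⟩ := (C.mem_msOf hb).1 ha
      exact C.atom_pow i,
    by rw [C.sum_msOf f N]; exact hs⟩

lemma vertex_rep {x : ℚ} (z : Factorizations M x) :
    ∃ (f : ℕ → ℕ) (N : ℕ) (hb : ∀ j, N ≤ j → f j = 0)
      (hs : ∑ j ∈ range N, (f j : ℚ) * q ^ j = x), z = C.toFact f N hb hs := by
  obtain ⟨s, hats, hsum⟩ := z
  have hK : ∃ K : Multiset ℕ, s = K.map (fun k => q ^ k) := by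
    clear hsum
    induction s using Multiset.induction_on with
    | empty => exact ⟨0, rfl⟩
    | cons a t ih =>
      obtain ⟨k, rfl⟩ := (C.atom_iff a).1 (hats a (Multiset.mem_cons_self a t))
      obtain ⟨K, rfl⟩ := ih (fun b hb => hats b (Multiset.mem_cons_of_mem hb))
      exact ⟨k ::ₘ K, by rw [Multiset.map_cons]⟩
  obtain ⟨K, rfl⟩ := hK
  set N := K.sum + 1 with hN
  have hKN : ∀ k ∈ K, k < N := by
    intro k hk
    have : k ≤ K.sum := Multiset.single_le_sum (fun x _ => Nat.zero_le x) k hk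
    omega
  set f : ℕ → ℕ := fun j => K.count j with hf
  have hbf : ∀ j, N ≤ j → f j = 0 := by
    intro j hj
    simp only [hf]
    rw [Multiset.count_eq_zero]
    intro hmem
    exact absurd (hKN j hmem) (by omega)
  have hms : ∀ (K' : Multiset ℕ) (N' : ℕ), (∀ k ∈ K', k < N') →
      K'.map (fun k => q ^ k) = msOf q (fun j => K'.count j) N' := by
    intro K'
    induction K' using Multiset.induction_on with
    | empty =>
      intro N' _
      unfold msOf
      simp
    | cons k t ih =>
      intro N' hN'
      rw [Multiset.map_cons, ih N' (fun b hb => hN' b (Multiset.mem_cons_of_mem hb))]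
      unfold msOf
      have hcc : ∀ j, Multiset.replicate ((k ::ₘ t).count j) (q ^ j)
          = Multiset.replicate (t.count j) (q ^ j) + (if j = k then {q ^ k} else 0) := by
        intro j
        rcases eq_or_ne j k with rfl | hne
        · rw [Multiset.count_cons_self, Multiset.replicate_add, if_pos rfl]
          simp [Multiset.replicate_one]
        · rw [Multiset.count_cons_of_ne hne, if_neg hne, add_zero]
      simp only [hcc]
      rw [Finset.sum_add_distrib]
      rw [Finset.sum_ite_eq' (range N') k (fun _ => ({q ^ k} : Multiset ℚ))]
      rw [if_pos (Finset.mem_range.2 (hN' k (Multiset.mem_cons_self k t)))]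
      rw [add_comm]
      rfl
  have hmseq : K.map (fun k => q ^ k) = msOf q f N := hms K N hKN
  have hs : ∑ j ∈ range N, (f j : ℚ) * q ^ j = x := by
    rw [← C.sum_msOf f N, ← hmseq]
    exact hsum
  exact ⟨f, N, hbf, hs, Subtype.ext hmseq⟩

end Ctx

/-- Trade `n` atoms at level `j` for `d` atoms at level `j+1`. -/
def tradeUp (n d : ℕ) (f : ℕ → ℕ) (j : ℕ) : ℕ → ℕ :=
  fun i => if i = j then f i - n else if i = j + 1 then f i + d else f i

/-- Trade `d` atoms at level `j+1` for `n` atoms at level `j`. -/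
def tradeDown (n d : ℕ) (f : ℕ → ℕ) (j : ℕ) : ℕ → ℕ :=
  fun i => if i = j then f i + n else if i = j + 1 then f i - d else f i

lemma nsum_ext {f : ℕ → ℕ} {N M' : ℕ} (h : N ≤ M') (hb : ∀ j, N ≤ j → f j = 0) :
    ∑ j ∈ Finset.range M', f j = ∑ j ∈ Finset.range N, f j :=
  (Finset.sum_subset (Finset.range_subset_range.2 h)
    (fun x _ hnx => hb x (by simpa using hnx))).symm

namespace Ctx
variable {q : ℚ} {n d : ℕ} {M : AddSubmonoid ℚ} (C : Ctx q n d M)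
include C

lemma hrel (j : ℕ) : (n:ℚ) * q ^ j = (d:ℚ) * q ^ (j+1) := by
  have := C.hqe
  rw [pow_succ]
  linear_combination (-(q:ℚ) ^ j) * this

lemma step_up {x : ℚ} (hx : ∀ m : ℕ, x ≠ (n:ℚ) * q ^ m) (f : ℕ → ℕ) (Nf : ℕ)
    (hbf : ∀ i, Nf ≤ i → f i = 0) (hsf : ∑ i ∈ range Nf, (f i : ℚ) * q ^ i = x)
    {j : ℕ} (hj : n ≤ f j) :
    ∃ (f' : ℕ → ℕ) (N' : ℕ) (hb' : ∀ i, N' ≤ i → f' i = 0)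
      (hs' : ∑ i ∈ range N', (f' i : ℚ) * q ^ i = x),
      (bettiGraph M x).Adj (C.toFact f Nf hbf hsf) (C.toFact f' N' hb' hs') ∧
      (∑ i ∈ range N', f' i) + n = (∑ i ∈ range Nf, f i) + d := by
  have hn2 := C.hn
  have hd2 := C.hd
  have hjNf : j < Nf := by
    by_contra hc
    have := hbf j (by omega)
    omega
  set f' : ℕ → ℕ := tradeUp n d f j with hf'
  set N' : ℕ := max Nf (j + 2) with hN'
  have hjj1 : j ≠ j + 1 := by omega
  have key : ∀ i, f' i + (if i = j then n else 0) = f i + (if i = j + 1 then d else 0) := by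
    intro i
    simp only [hf', tradeUp]
    rcases eq_or_ne i j with rfl | h1
    · simp [hjj1]
      omega
    · rcases eq_or_ne i (j+1) with rfl | h2
      · simp [h1]
      · simp [h1, h2]
  have hb' : ∀ i, N' ≤ i → f' i = 0 := by
    intro i hi
    have h0 : f i = 0 := hbf i (by omega)
    simp only [hf', tradeUp, h0]
    have h1 : i ≠ j := by omega
    have h2 : i ≠ j + 1 := by omega
    rw [if_neg h1, if_neg h2]
  have hsfN' : ∑ i ∈ range N', (f i : ℚ) * q ^ i = x := by
    rw [sum_ext (le_max_left Nf (j+2)) (fun i hi => by rw [hbf i hi]; simp)]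
    exact hsf
  have hjN' : j < N' := by omega
  have hj1N' : j + 1 < N' := by omega
  have hs' : ∑ i ∈ range N', (f' i : ℚ) * q ^ i = x := by
    have e1 : ∑ i ∈ range N', ((f' i + (if i = j then n else 0) : ℕ) : ℚ) * q ^ i
        = ∑ i ∈ range N', ((f i + (if i = j + 1 then d else 0) : ℕ) : ℚ) * q ^ i := by
      refine Finset.sum_congr rfl fun i _ => by rw [key i]
    rw [C.sum_add, C.sum_add, C.sum_ite N' j n hjN', C.sum_ite N' (j+1) d hj1N'] at e1
    have := C.hrel j
    rw [hsfN'] at e1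
    linarith [e1]
  have hcount : ∀ (h : C.toFact f Nf hbf hsf = C.toFact f' N' hb' hs'), False := by
    intro h
    have e := (C.msOf_eq_iff hbf hb').1 (congrArg Subtype.val h) (j+1)
    have h1 : j + 1 ≠ j := by omega
    simp only [hf', tradeUp, if_neg h1, eq_self_iff_true, if_true] at e
    omega
  refine ⟨f', N', hb', hs', ⟨fun h => hcount h, ?_⟩, ?_⟩
  · -- common atom
    by_cases hshare : ∃ i, f i ≠ 0 ∧ f' i ≠ 0
    · obtain ⟨i, hfi, hf'i⟩ := hshare
      exact ⟨q ^ i, (C.mem_msOf hbf).2 ⟨i, hfi, rfl⟩, (C.mem_msOf hb').2 ⟨i, hf'i, rfl⟩⟩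
    · exfalso
      push_neg at hshare
      have hdelta : ∀ i, f i = if i = j then n else 0 := by
        intro i
        have h2 : f i = 0 ∨ f' i = 0 := by
          by_cases hz : f i = 0
          · exact Or.inl hz
          · exact Or.inr (hshare i hz)
        rcases eq_or_ne i j with rfl | h1
        · rw [if_pos rfl]
          simp only [hf', tradeUp, eq_self_iff_true, if_true] at h2
          omega
        · rw [if_neg h1]
          rcases eq_or_ne i (j+1) with rfl | h2'
          · simp only [hf', tradeUp, if_neg h1, eq_self_iff_true, if_true] at h2
            omega
          · simp only [hf', tradeUp, if_neg h1, if_neg h2'] at h2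
            omega
      apply hx j
      rw [← hsf]
      calc ∑ i ∈ range Nf, (f i : ℚ) * q ^ i
          = ∑ i ∈ range Nf, ((if i = j then n else 0 : ℕ) : ℚ) * q ^ i :=
            Finset.sum_congr rfl fun i _ => by rw [← hdelta i]
        _ = (n : ℚ) * q ^ j := C.sum_ite Nf j n hjNf
  · -- totals
    have e1 : ∑ i ∈ range N', (f' i + (if i = j then n else 0))
        = ∑ i ∈ range N', (f i + (if i = j + 1 then d else 0)) :=
      Finset.sum_congr rfl fun i _ => key i
    rw [Finset.sum_add_distrib, Finset.sum_add_distrib,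
      Finset.sum_ite_eq' (range N') j (fun _ => n),
      Finset.sum_ite_eq' (range N') (j+1) (fun _ => d),
      if_pos (Finset.mem_range.2 hjN'), if_pos (Finset.mem_range.2 hj1N')] at e1
    rw [nsum_ext (le_max_left Nf (j+2)) hbf] at e1
    exact e1

lemma step_down {x : ℚ} (hx : ∀ m : ℕ, x ≠ (n:ℚ) * q ^ m) (f : ℕ → ℕ) (Nf : ℕ)
    (hbf : ∀ i, Nf ≤ i → f i = 0) (hsf : ∑ i ∈ range Nf, (f i : ℚ) * q ^ i = x)
    {j : ℕ} (hj : d ≤ f (j+1)) :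
    ∃ (f' : ℕ → ℕ) (N' : ℕ) (hb' : ∀ i, N' ≤ i → f' i = 0)
      (hs' : ∑ i ∈ range N', (f' i : ℚ) * q ^ i = x),
      (bettiGraph M x).Adj (C.toFact f Nf hbf hsf) (C.toFact f' N' hb' hs') ∧
      (∑ i ∈ range N', f' i) + d = (∑ i ∈ range Nf, f i) + n := by
  have hn2 := C.hn
  have hd2 := C.hd
  have hjNf : j + 1 < Nf := by
    by_contra hc
    have := hbf (j+1) (by omega)
    omega
  set f' : ℕ → ℕ := tradeDown n d f j with hf'
  set N' : ℕ := max Nf (j + 2) with hN'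
  have hjj1 : j ≠ j + 1 := by omega
  have key : ∀ i, f' i + (if i = j + 1 then d else 0) = f i + (if i = j then n else 0) := by
    intro i
    simp only [hf', tradeDown]
    rcases eq_or_ne i j with rfl | h1
    · simp [hjj1]
    · rcases eq_or_ne i (j+1) with rfl | h2
      · simp [h1]
        omega
      · simp [h1, h2]
  have hb' : ∀ i, N' ≤ i → f' i = 0 := by
    intro i hi
    have h0 : f i = 0 := hbf i (by omega)
    simp only [hf', tradeDown, h0]
    have h1 : i ≠ j := by omega
    have h2 : i ≠ j + 1 := by omega
    rw [if_neg h1, if_neg h2]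
  have hsfN' : ∑ i ∈ range N', (f i : ℚ) * q ^ i = x := by
    rw [sum_ext (le_max_left Nf (j+2)) (fun i hi => by rw [hbf i hi]; simp)]
    exact hsf
  have hjN' : j < N' := by omega
  have hj1N' : j + 1 < N' := by omega
  have hs' : ∑ i ∈ range N', (f' i : ℚ) * q ^ i = x := by
    have e1 : ∑ i ∈ range N', ((f' i + (if i = j + 1 then d else 0) : ℕ) : ℚ) * q ^ i
        = ∑ i ∈ range N', ((f i + (if i = j then n else 0) : ℕ) : ℚ) * q ^ i := by
      refine Finset.sum_congr rfl fun i _ => by rw [key i]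
    rw [C.sum_add, C.sum_add, C.sum_ite N' j n hjN', C.sum_ite N' (j+1) d hj1N'] at e1
    have := C.hrel j
    rw [hsfN'] at e1
    linarith [e1]
  have hcount : ∀ (h : C.toFact f Nf hbf hsf = C.toFact f' N' hb' hs'), False := by
    intro h
    have e := (C.msOf_eq_iff hbf hb').1 (congrArg Subtype.val h) j
    simp only [hf', tradeDown, eq_self_iff_true, if_true] at e
    omega
  refine ⟨f', N', hb', hs', ⟨fun h => hcount h, ?_⟩, ?_⟩
  · by_cases hshare : ∃ i, f i ≠ 0 ∧ f' i ≠ 0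
    · obtain ⟨i, hfi, hf'i⟩ := hshare
      exact ⟨q ^ i, (C.mem_msOf hbf).2 ⟨i, hfi, rfl⟩, (C.mem_msOf hb').2 ⟨i, hf'i, rfl⟩⟩
    · exfalso
      push_neg at hshare
      have hdelta : ∀ i, f i = if i = j + 1 then d else 0 := by
        intro i
        have h2 : f i = 0 ∨ f' i = 0 := by
          by_cases hz : f i = 0
          · exact Or.inl hz
          · exact Or.inr (hshare i hz)
        rcases eq_or_ne i (j+1) with rfl | h2'
        · rw [if_pos rfl]
          have h4 : j + 1 ≠ j := by omega
          simp only [hf', tradeDown, if_neg h4, eq_self_iff_true, if_true] at h2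
          omega
        · rw [if_neg h2']
          rcases eq_or_ne i j with rfl | h1
          · simp only [hf', tradeDown, eq_self_iff_true, if_true] at h2
            omega
          · simp only [hf', tradeDown, if_neg h1, if_neg h2'] at h2
            omega
      apply hx j
      rw [← hsf]
      calc ∑ i ∈ range Nf, (f i : ℚ) * q ^ i
          = ∑ i ∈ range Nf, ((if i = j + 1 then d else 0 : ℕ) : ℚ) * q ^ i :=
            Finset.sum_congr rfl fun i _ => by rw [← hdelta i]
        _ = (d : ℚ) * q ^ (j+1) := C.sum_ite Nf (j+1) d hjNf
        _ = (n : ℚ) * q ^ j := (C.hrel j).symm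
  · have e1 : ∑ i ∈ range N', (f' i + (if i = j + 1 then d else 0))
        = ∑ i ∈ range N', (f i + (if i = j then n else 0)) :=
      Finset.sum_congr rfl fun i _ => key i
    rw [Finset.sum_add_distrib, Finset.sum_add_distrib,
      Finset.sum_ite_eq' (range N') j (fun _ => n),
      Finset.sum_ite_eq' (range N') (j+1) (fun _ => d),
      if_pos (Finset.mem_range.2 hjN'), if_pos (Finset.mem_range.2 hj1N')] at e1
    rw [nsum_ext (le_max_left Nf (j+2)) hbf] at e1
    exact e1

end Ctx

lemma exists_adj_of_walk {V : Type*} {G : SimpleGraph V} {v : V} :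
    ∀ {u : V} (p : G.Walk u v), u ≠ v → ∃ w, G.Adj w v := by
  intro u p
  induction p with
  | nil => intro h; exact absurd rfl h
  | @cons a b c h' p' ih =>
    intro _
    by_cases hbc : b = c
    · subst hbc; exact ⟨a, h'⟩
    · exact ih hbc

namespace Ctx
variable {q : ℚ} {n d : ℕ} {M : AddSubmonoid ℚ} (C : Ctx q n d M)
include C

lemma connected_n (hdn : d < n) {x : ℚ} (hx : ∀ m : ℕ, x ≠ (n:ℚ) * q ^ m) :
    ∀ t : ℕ, ∀ (f : ℕ → ℕ) (Nf : ℕ) (g : ℕ → ℕ) (Ng : ℕ)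
      (hbf : ∀ j, Nf ≤ j → f j = 0) (hbg : ∀ j, Ng ≤ j → g j = 0)
      (hsf : ∑ j ∈ range Nf, (f j : ℚ) * q ^ j = x)
      (hsg : ∑ j ∈ range Ng, (g j : ℚ) * q ^ j = x),
      (∑ j ∈ range Nf, f j) + (∑ j ∈ range Ng, g j) ≤ t →
      (bettiGraph M x).Reachable (C.toFact f Nf hbf hsf) (C.toFact g Ng hbg hsg) := by
  intro t
  induction t using Nat.strong_induction_on with
  | _ t IH =>
    intro f Nf g Ng hbf hbg hsf hsg ht
    by_cases hfred : ∃ j, n ≤ f j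
    · obtain ⟨j, hj⟩ := hfred
      obtain ⟨f', N', hb', hs', hadj, htot⟩ := C.step_up hx f Nf hbf hsf hj
      have hjNf : j < Nf := by
        by_contra hc
        have := hbf j (by omega)
        omega
      have hfj_le : f j ≤ ∑ i ∈ range Nf, f i :=
        Finset.single_le_sum (fun i _ => Nat.zero_le (f i)) (Finset.mem_range.2 hjNf)
      have hn2 := C.hn
      have htlt : (∑ i ∈ range N', f' i) + (∑ i ∈ range Ng, g i) < t := by omega
      exact (hadj.reachable).trans
        (IH _ htlt f' N' g Ng hb' hbg hs' hsg (le_refl _))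
    · by_cases hgred : ∃ j, n ≤ g j
      · obtain ⟨j, hj⟩ := hgred
        obtain ⟨g', N', hb', hs', hadj, htot⟩ := C.step_up hx g Ng hbg hsg hj
        have hjNg : j < Ng := by
          by_contra hc
          have := hbg j (by omega)
          omega
        have hgj_le : g j ≤ ∑ i ∈ range Ng, g i :=
          Finset.single_le_sum (fun i _ => Nat.zero_le (g i)) (Finset.mem_range.2 hjNg)
        have hn2 := C.hn
        have htlt : (∑ i ∈ range Nf, f i) + (∑ i ∈ range N', g' i) < t := by omega
        exact (IH _ htlt f Nf g' N' hbf hb' hsf hs' (le_refl _)).trans hadj.reachable.symm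
      · push_neg at hfred hgred
        have hfg : ∀ k, f k = g k := by
          apply reduced_unique_n C.hn0 C.hcop C.hqe C.hq0 f g (max Nf Ng)
            (fun j hj => hbf j (le_trans (le_max_left _ _) hj))
            (fun j hj => hbg j (le_trans (le_max_right _ _) hj))
            hfred hgred
          rw [sum_ext (le_max_left Nf Ng) (fun i hi => by rw [hbf i hi]; simp),
            sum_ext (le_max_right Nf Ng) (fun i hi => by rw [hbg i hi]; simp), hsf, hsg]
        have heq : C.toFact f Nf hbf hsf = C.toFact g Ng hbg hsg :=
          Subtype.ext ((C.msOf_eq_iff hbf hbg).2 hfg)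
        rw [heq]

lemma connected_d (hnd : n < d) {x : ℚ} (hx : ∀ m : ℕ, x ≠ (n:ℚ) * q ^ m) :
    ∀ t : ℕ, ∀ (f : ℕ → ℕ) (Nf : ℕ) (g : ℕ → ℕ) (Ng : ℕ)
      (hbf : ∀ j, Nf ≤ j → f j = 0) (hbg : ∀ j, Ng ≤ j → g j = 0)
      (hsf : ∑ j ∈ range Nf, (f j : ℚ) * q ^ j = x)
      (hsg : ∑ j ∈ range Ng, (g j : ℚ) * q ^ j = x),
      (∑ j ∈ range Nf, f j) + (∑ j ∈ range Ng, g j) ≤ t →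
      (bettiGraph M x).Reachable (C.toFact f Nf hbf hsf) (C.toFact g Ng hbg hsg) := by
  intro t
  induction t using Nat.strong_induction_on with
  | _ t IH =>
    intro f Nf g Ng hbf hbg hsf hsg ht
    by_cases hfred : ∃ j, d ≤ f (j + 1)
    · obtain ⟨j, hj⟩ := hfred
      obtain ⟨f', N', hb', hs', hadj, htot⟩ := C.step_down hx f Nf hbf hsf hj
      have hjNf : j + 1 < Nf := by
        by_contra hc
        have := hbf (j+1) (by omega)
        have := C.hd
        omega
      have hfj_le : f (j+1) ≤ ∑ i ∈ range Nf, f i :=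
        Finset.single_le_sum (fun i _ => Nat.zero_le (f i)) (Finset.mem_range.2 hjNf)
      have hd2 := C.hd
      have htlt : (∑ i ∈ range N', f' i) + (∑ i ∈ range Ng, g i) < t := by omega
      exact (hadj.reachable).trans
        (IH _ htlt f' N' g Ng hb' hbg hs' hsg (le_refl _))
    · by_cases hgred : ∃ j, d ≤ g (j + 1)
      · obtain ⟨j, hj⟩ := hgred
        obtain ⟨g', N', hb', hs', hadj, htot⟩ := C.step_down hx g Ng hbg hsg hj
        have hjNg : j + 1 < Ng := by
          by_contra hc
          have := hbg (j+1) (by omega)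
          have := C.hd
          omega
        have hgj_le : g (j+1) ≤ ∑ i ∈ range Ng, g i :=
          Finset.single_le_sum (fun i _ => Nat.zero_le (g i)) (Finset.mem_range.2 hjNg)
        have hd2 := C.hd
        have htlt : (∑ i ∈ range Nf, f i) + (∑ i ∈ range N', g' i) < t := by omega
        exact (IH _ htlt f Nf g' N' hbf hb' hsf hs' (le_refl _)).trans hadj.reachable.symm
      · push_neg at hfred hgred
        have hfg : ∀ k, f k = g k := by
          apply reduced_unique_d C.hn0 C.hd0 C.hcop C.hqe C.hq0 f g (max Nf Ng)
            (fun j hj => hbf j (le_trans (le_max_left _ _) hj))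
            (fun j hj => hbg j (le_trans (le_max_right _ _) hj))
            (fun j hj => by obtain ⟨i, rfl⟩ : ∃ i, j = i + 1 := ⟨j - 1, by omega⟩; exact hfred i)
            (fun j hj => by obtain ⟨i, rfl⟩ : ∃ i, j = i + 1 := ⟨j - 1, by omega⟩; exact hgred i)
          rw [sum_ext (le_max_left Nf Ng) (fun i hi => by rw [hbf i hi]; simp),
            sum_ext (le_max_right Nf Ng) (fun i hi => by rw [hbg i hi]; simp), hsf, hsg]
        have heq : C.toFact f Nf hbf hsf = C.toFact g Ng hbg hsg :=
          Subtype.ext ((C.msOf_eq_iff hbf hbg).2 hfg)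
        rw [heq]

lemma connected_of {x : ℚ} (hxM : x ∈ M) (hx : ∀ m : ℕ, x ≠ (n:ℚ) * q ^ m) :
    (bettiGraph M x).Connected := by
  rw [SimpleGraph.connected_iff]
  refine ⟨?_, ?_⟩
  · intro z z'
    obtain ⟨f, Nf, hbf, hsf, rfl⟩ := C.vertex_rep z
    obtain ⟨g, Ng, hbg, hsg, rfl⟩ := C.vertex_rep z'
    rcases lt_or_gt_of_ne C.hnd with h1 | h1
    · exact C.connected_d h1 hx _ f Nf g Ng hbf hbg hsf hsg (le_refl _)
    · exact C.connected_n h1 hx _ f Nf g Ng hbf hbg hsf hsg (le_refl _)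
  · obtain ⟨f, N, hb, hs⟩ := C.rep_of_mem hxM
    exact ⟨C.toFact f N hb hs⟩

lemma no_adj (c K : ℕ) (hc1 : 1 ≤ c) (hcn : c ≤ n) (hcd : c ≤ d) {x : ℚ}
    (hbv : ∀ i, K + 1 ≤ i → (fun i => if i = K then c else 0) i = 0)
    (hsv : ∑ i ∈ range (K+1), (((fun i => if i = K then c else 0) i : ℕ) : ℚ) * q ^ i = x)
    (z : Factorizations M x) :
    ¬ (bettiGraph M x).Adj z (C.toFact (fun i => if i = K then c else 0) (K+1) hbv hsv) := by
  intro hadj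
  obtain ⟨hne, a, haz, hav⟩ := hadj
  obtain ⟨i0, hi0, rfl⟩ := (C.mem_msOf hbv).1 hav
  have hiK : i0 = K := by
    by_contra h
    simp [h] at hi0
  subst hiK
  obtain ⟨g, Ng, hbg, hsg, rfl⟩ := C.vertex_rep z
  have hgK : g i0 ≠ 0 := by
    obtain ⟨i1, hi1, he⟩ := (C.mem_msOf hbg).1 haz
    have : i1 = i0 := C.pow_injective he.symm
    rwa [this] at hi1
  have hxval : x = (c:ℚ) * q ^ i0 := by
    rw [← hsv, C.sum_ite (i0+1) i0 c (Nat.lt_succ_self i0)]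
  set Ng' := max Ng (i0 + 1) with hNg'
  set g' : ℕ → ℕ := fun i => g i - (if i = i0 then 1 else 0) with hg'
  have hbg' : ∀ i, Ng' ≤ i → g' i = 0 := by
    intro i hi
    have h0 : g i = 0 := hbg i (by omega)
    simp only [hg', h0]
    omega
  have hkey : ∀ i, g' i + (if i = i0 then 1 else 0) = g i := by
    intro i
    rcases eq_or_ne i i0 with rfl | h1
    · simp only [hg', eq_self_iff_true, if_true]
      omega
    · simp only [hg', if_neg h1]
      omega
  have hsgN' : ∑ i ∈ range Ng', (g i : ℚ) * q ^ i = x := by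
    rw [sum_ext (le_max_left Ng (i0+1)) (fun i hi => by rw [hbg i hi]; simp)]
    exact hsg
  have hi0N' : i0 < Ng' := by omega
  have hsum' : ∑ i ∈ range Ng', (g' i : ℚ) * q ^ i = ((c - 1 : ℕ) : ℚ) * q ^ i0 := by
    have e1 : ∑ i ∈ range Ng', ((g' i + (if i = i0 then 1 else 0) : ℕ) : ℚ) * q ^ i
        = ∑ i ∈ range Ng', (g i : ℚ) * q ^ i :=
      Finset.sum_congr rfl fun i _ => by rw [hkey i]
    rw [C.sum_add, C.sum_ite Ng' i0 1 hi0N', hsgN'] at e1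
    have hc : ((c - 1 : ℕ) : ℚ) = (c : ℚ) - 1 := by
      push_cast [Nat.cast_sub hc1]
      ring
    rw [hc]
    rw [hxval] at e1
    push_cast at e1 ⊢
    linarith [e1]
  have hu := unique_small C.hn0 C.hcop C.hqe C.hq0 g' Ng' hbg' (c-1) i0
    (by omega) (by omega) hsum'
  have hgd : ∀ i, g i = if i = i0 then c else 0 := by
    intro i
    have h1 := hu i
    have h2 := hkey i
    rcases eq_or_ne i i0 with rfl | h3
    · simp only [eq_self_iff_true, if_true] at h1 h2 ⊢
      omega
    · simp only [if_neg h3] at h1 h2 ⊢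
      omega
  exact hne (Subtype.ext ((C.msOf_eq_iff hbg hbv).2 hgd))

lemma isBetti_nqm (m : ℕ) : IsBetti M ((n:ℚ) * q ^ m) := by
  have hn2 := C.hn
  have hd2 := C.hd
  set x : ℚ := (n:ℚ) * q ^ m with hxdef
  have hb1 : ∀ i, m + 1 ≤ i → (fun i => if i = m then n else 0) i = 0 :=
    fun i hi => if_neg (by omega)
  have hs1 : ∑ i ∈ range (m+1), (((fun i => if i = m then n else 0) i : ℕ) : ℚ) * q ^ i = x :=
    C.sum_ite (m+1) m n (Nat.lt_succ_self m)
  have hb2 : ∀ i, (m+1) + 1 ≤ i → (fun i => if i = m + 1 then d else 0) i = 0 :=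
    fun i hi => if_neg (by omega)
  have hs2 : ∑ i ∈ range (m+2), (((fun i => if i = m + 1 then d else 0) i : ℕ) : ℚ) * q ^ i
      = x := by
    rw [C.sum_ite (m+2) (m+1) d (by omega)]
    exact (C.hrel m).symm
  have hxM : x ∈ M := by
    rw [← hs1]
    exact C.mem_of_rep _ _
  set v1 := C.toFact (fun i => if i = m then n else 0) (m+1) hb1 hs1 with hv1
  set v2 := C.toFact (fun i => if i = m + 1 then d else 0) (m+2) hb2 hs2 with hv2
  have hne12 : v1 ≠ v2 := by
    intro h
    have := (C.msOf_eq_iff hb1 hb2).1 (congrArg Subtype.val h) m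
    simp only [eq_self_iff_true, if_true, if_neg (show m ≠ m + 1 by omega)] at this
    omega
  refine ⟨hxM, fun hconn => ?_⟩
  rcases lt_or_gt_of_ne C.hnd with h1 | h1
  · -- n < d : v1 is isolated
    obtain ⟨p⟩ := hconn.preconnected v2 v1
    obtain ⟨w, hw⟩ := exists_adj_of_walk p (Ne.symm hne12)
    exact C.no_adj n m (by omega) (le_refl n) (by omega) hb1 hs1 w hw
  · -- d < n : v2 is isolated
    obtain ⟨p⟩ := hconn.preconnected v1 v2
    obtain ⟨w, hw⟩ := exists_adj_of_walk p hne12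
    exact C.no_adj d (m+1) (by omega) (by omega) (le_refl d) hb2 hs2 w hw

end Ctx
end S16

/-- Let `q` be a non-integer positive rational with `ℕ₀[q]` atomic (equivalently
`1/q ∉ ℕ≥2`), `q = n/d` in lowest terms. The set of Betti elements of `ℕ₀[q]` is exactly
`{n^{m+1}/d^m : m ∈ ℕ₀}`. -/
theorem stmt_16 (q : ℚ) (hq : 0 < q) (hqint : ¬ ∃ m : ℤ, q = (m : ℚ))
    (hq2 : ¬ ∃ m : ℕ, 2 ≤ m ∧ q⁻¹ = (m : ℚ))
    (M : AddSubmonoid ℚ)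
    (hM : M = AddSubmonoid.closure (Set.range fun k : ℕ => q ^ k)) :
    {x | IsBetti M x} = {x : ℚ | ∃ m : ℕ, x = (q.num : ℚ) ^ (m + 1) / (q.den : ℚ) ^ m} := by
  classical
  have hd1 : q.den ≠ 1 := by
    intro h
    exact hqint ⟨q.num, by rw [← Rat.num_div_den q, h]; simp⟩
  have hdpos : 0 < q.den := q.pos
  have hd2 : 2 ≤ q.den := by omega
  have hnum_pos : 0 < q.num := Rat.num_pos.2 hq
  set n := q.num.toNat with hn_def
  set d := q.den with hd_def
  have hnum_cast : ((n : ℕ) : ℚ) = (q.num : ℚ) := by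
    rw [hn_def]
    exact_mod_cast congrArg (fun z : ℤ => (z : ℚ)) (Int.toNat_of_nonneg hnum_pos.le)
  have hdQ : ((d : ℕ) : ℚ) ≠ 0 := Nat.cast_ne_zero.2 (by omega)
  have hqe : ((d : ℕ) : ℚ) * q = ((n : ℕ) : ℚ) := by
    rw [hnum_cast]
    nth_rewrite 1 [← Rat.num_div_den q]
    rw [hd_def]
    field_simp
  have hn2 : 2 ≤ n := by
    by_contra hc
    have hn1 : n = 1 := by omega
    apply hq2
    refine ⟨d, hd2, ?_⟩
    have h1 : ((d : ℕ) : ℚ) * q = 1 := by rw [hqe, hn1]; norm_num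
    exact inv_eq_of_mul_eq_one_left h1
  have hcop : n.Coprime d := by
    have h1 : q.num.natAbs = n := by rw [hn_def]; omega
    rw [← h1, hd_def]
    exact q.reduced
  have C : S16.Ctx q n d M := ⟨hq, hn2, hd2, hcop, hqe, hM⟩
  have hform : ∀ m : ℕ, (q.num : ℚ) ^ (m + 1) / (q.den : ℚ) ^ m = ((n : ℕ) : ℚ) * q ^ m := by
    intro m
    have hqq : q = ((n : ℕ) : ℚ) / ((d : ℕ) : ℚ) := by
      rw [eq_div_iff hdQ, mul_comm]
      exact hqe
    rw [← hnum_cast, ← hd_def, hqq, div_pow]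
    field_simp
    ring
  ext x
  simp only [Set.mem_setOf_eq]
  constructor
  · intro hB
    by_contra hno
    push_neg at hno
    have hx : ∀ m : ℕ, x ≠ ((n : ℕ) : ℚ) * q ^ m := fun m h => hno m (by rw [hform m]; exact h)
    exact hB.2 (C.connected_of hB.1 hx)
  · rintro ⟨m, rfl⟩
    rw [hform m]
    exact C.isBetti_nqm m
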